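/- Fix κ ≥ 0. Let Ω ⊂ ℝ³ be a measurable set of finite Lebesgue volume V and let q : Ω → ℂ be measurable with |q(y)| ≤ Q₀ for almost every y ∈ Ω. Then the integral operator V defined by (Vf)(x) := ∫_Ω Φ_κ(x, y) q(y) f(y) dy maps L²(Ω) boundedly into L²(Ω), with ‖Vf‖_{L²(Ω)} ≤ (Q₀/2) · (3V/(4π))^{2/3} · ‖f‖_{L²(Ω)} for every f ∈ L²(Ω). -/

import Mathlib

open MeasureTheory Metric Set
open scoped ENNReal NNReal

noncomputable section

/-- The fundamental solution of the Helmholtz equation in `ℝ³` with wave number `κ`: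
`Φ_κ(x,y) = e^{iκ|x−y|} / (4π|x−y|)`. -/
noncomputable def Phi (κ : ℝ) (x y : EuclideanSpace ℝ (Fin 3)) : ℂ :=
  Complex.exp (Complex.I * (κ : ℂ) * ((dist x y : ℝ) : ℂ)) /
    (((4 * Real.pi * dist x y : ℝ) : ℂ))

-- volume of a ball in ℝ³
lemma vol_ball3 (x : EuclideanSpace ℝ (Fin 3)) {r : ℝ} (hr : 0 ≤ r) :
    volume (ball x r) = ENNReal.ofReal (4 * Real.pi / 3 * r ^ 3) := by
  rw [EuclideanSpace.volume_ball]
  have hcard : (Fintype.card (Fin 3)) = 3 := by simp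
  rw [hcard]
  have hπ : (0:ℝ) < Real.pi := Real.pi_pos
  have hs : Real.sqrt Real.pi ≠ 0 := by positivity
  have hΓ32 : Real.Gamma ((3:ℝ)/2) = 1/2 * Real.sqrt Real.pi := by
    have : ((3:ℝ)/2) = 1/2 + 1 := by norm_num
    rw [this, Real.Gamma_add_one (by norm_num), Real.Gamma_one_half_eq]
  have hΓ : Real.Gamma ((3:ℝ)/2 + 1) = 3/4 * Real.sqrt Real.pi := by
    rw [Real.Gamma_add_one (by norm_num), hΓ32]; ring
  have hcube : Real.sqrt Real.pi ^ 3 = Real.pi * Real.sqrt Real.pi := by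
    rw [pow_succ, Real.sq_sqrt Real.pi_pos.le]
  have hval : Real.sqrt Real.pi ^ 3 / Real.Gamma ((3:ℝ)/2 + 1) = 4 * Real.pi / 3 := by
    rw [hΓ, hcube]; field_simp
  have h3 : ((3:ℕ):ℝ) = 3 := by norm_num
  rw [show (((3:ℕ):ℝ)/2 + 1) = ((3:ℝ)/2 + 1) by norm_num] at *
  rw [hval, ← ENNReal.ofReal_pow hr, ← ENNReal.ofReal_mul (by positivity)]
  ring_nf

lemma ball_lintegral (x : EuclideanSpace ℝ (Fin 3)) {R : ℝ} (hR : 0 < R) :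
    ∫⁻ y in ball x R, ENNReal.ofReal (dist x y)⁻¹ ∂volume
      = ENNReal.ofReal (2 * Real.pi * R ^ 2) := by
  have hπ : (0:ℝ) < Real.pi := Real.pi_pos
  have hmble : AEMeasurable (fun y => (dist x y)⁻¹) (volume.restrict (ball x R)) :=
    ((continuous_const.dist continuous_id).measurable.inv).aemeasurable
  rw [lintegral_eq_lintegral_meas_lt _ (ae_of_all _ fun y => inv_nonneg.2 dist_nonneg) hmble]
  have key : ∀ t ∈ Ioi (0:ℝ),
      (volume.restrict (ball x R)) {y | t < (dist x y)⁻¹}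
        = ENNReal.ofReal (4 * Real.pi / 3 * (min R t⁻¹) ^ 3) := by
    intro t ht
    have ht0 : (0:ℝ) < t := ht
    have hmset : MeasurableSet {y : EuclideanSpace ℝ (Fin 3) | t < (dist x y)⁻¹} :=
      measurableSet_lt measurable_const ((continuous_const.dist continuous_id).measurable.inv)
    rw [Measure.restrict_apply hmset]
    have hset : {y : EuclideanSpace ℝ (Fin 3) | t < (dist x y)⁻¹} ∩ ball x R
        = ball x (min R t⁻¹) \ {x} := by
      ext y
      simp only [mem_inter_iff, mem_setOf_eq, mem_ball, mem_diff, mem_singleton_iff,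
        lt_min_iff, dist_comm y x]
      constructor
      · rintro ⟨h1, h2⟩
        have hd : 0 < dist x y := by
          by_contra h
          push_neg at h
          have : dist x y = 0 := le_antisymm h dist_nonneg
          rw [this] at h1; simp at h1; linarith
        have hlt : dist x y < t⁻¹ := (lt_inv_comm₀ ht0 hd).1 h1
        exact ⟨⟨h2, hlt⟩, fun h => by rw [h, dist_self] at hd; exact lt_irrefl _ hd⟩
      · rintro ⟨⟨h1, h2⟩, h3⟩
        have hd : 0 < dist x y := dist_pos.2 fun h => h3 h.symm
        refine ⟨?_, h1⟩
        exact (lt_inv_comm₀ hd ht0).1 h2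
    rw [hset, measure_diff_null (measure_singleton x), vol_ball3 x (le_min hR.le (by positivity))]
  rw [setLIntegral_congr_fun measurableSet_Ioi key]
  -- split the integral
  have hRinv : (0:ℝ) < R⁻¹ := inv_pos.2 hR
  rw [← Ioc_union_Ioi_eq_Ioi hRinv.le,
    lintegral_union measurableSet_Ioi Ioc_disjoint_Ioi_same]
  have h1 : ∫⁻ t in Ioc (0:ℝ) R⁻¹, ENNReal.ofReal (4 * Real.pi / 3 * (min R t⁻¹) ^ 3)
      = ENNReal.ofReal (4 * Real.pi / 3 * R ^ 2) := by
    rw [setLIntegral_congr_fun measurableSet_Ioc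
      (fun t ht => by
        have h1 : R ≤ t⁻¹ := by
          rw [le_inv_comm₀ hR ht.1]
          exact ht.2
        rw [min_eq_left h1]), setLIntegral_const, Real.volume_Ioc,
      ← ENNReal.ofReal_mul (by positivity)]
    congr 1
    rw [sub_zero]
    field_simp
  have h2 : ∫⁻ t in Ioi R⁻¹, ENNReal.ofReal (4 * Real.pi / 3 * (min R t⁻¹) ^ 3)
      = ENNReal.ofReal (4 * Real.pi / 3 * R ^ 2 / 2) := by
    have hcong : ∀ t ∈ Ioi R⁻¹, ENNReal.ofReal (4 * Real.pi / 3 * (min R t⁻¹) ^ 3)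
        = ENNReal.ofReal (4 * Real.pi / 3 * t ^ (-3:ℝ)) := by
      intro t ht
      have ht0 : (0:ℝ) < t := lt_trans hRinv ht
      have htinv : t⁻¹ ≤ R := by
        rw [inv_le_comm₀ ht0 hR]
        exact le_of_lt ht
      rw [min_eq_right htinv]
      congr 1
      rw [show (-3:ℝ) = -((3:ℕ):ℝ) by norm_num, Real.rpow_neg ht0.le, Real.rpow_natCast,
        inv_pow]
    rw [setLIntegral_congr_fun measurableSet_Ioi hcong]
    have hint : IntegrableOn (fun t : ℝ => 4 * Real.pi / 3 * t ^ (-3:ℝ)) (Ioi R⁻¹) :=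
      (integrableOn_Ioi_rpow_of_lt (by norm_num) hRinv).const_mul _
    rw [← ofReal_integral_eq_lintegral_ofReal hint
      ((ae_restrict_iff' measurableSet_Ioi).2 (ae_of_all _ (fun t ht => by
        have ht0 : (0:ℝ) < t := lt_trans hRinv ht
        positivity)))]
    · congr 1
      rw [MeasureTheory.integral_const_mul, integral_Ioi_rpow_of_lt (by norm_num) hRinv]
      have : (R⁻¹ : ℝ) ^ (-3 + 1 : ℝ) = R ^ 2 := by
        rw [show (-3 + 1 : ℝ) = -2 by norm_num, Real.rpow_neg (inv_nonneg.2 hR.le),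
          Real.inv_rpow hR.le, inv_inv, Real.rpow_two]
      rw [this]
      ring
  rw [h1, h2, ← ENNReal.ofReal_add (by positivity) (by positivity)]
  congr 1
  ring

lemma key_bound (Ω : Set (EuclideanSpace ℝ (Fin 3))) {V : ℝ} (hV0 : 0 ≤ V)
    (hV : volume Ω = ENNReal.ofReal V) (x : EuclideanSpace ℝ (Fin 3)) :
    ∫⁻ y in Ω, ENNReal.ofReal (dist x y)⁻¹ ∂volume
      ≤ ENNReal.ofReal (2 * Real.pi * ((3 * V / (4 * Real.pi)) ^ ((1:ℝ)/3)) ^ 2) := by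
  have hπ : (0:ℝ) < Real.pi := Real.pi_pos
  rcases eq_or_lt_of_le hV0 with hV0' | hV0'
  · have : volume Ω = 0 := by rw [hV, ← hV0', ENNReal.ofReal_zero]
    rw [setLIntegral_measure_zero _ _ this]
    exact zero_le
  set R : ℝ := (3 * V / (4 * Real.pi)) ^ ((1:ℝ)/3) with hRdef
  have hb : (0:ℝ) < 3 * V / (4 * Real.pi) := by positivity
  have hR : 0 < R := Real.rpow_pos_of_pos hb _
  have hR3 : R ^ 3 = 3 * V / (4 * Real.pi) := by
    rw [hRdef, ← Real.rpow_natCast ((3 * V / (4 * Real.pi)) ^ ((1:ℝ)/3)) 3,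
      ← Real.rpow_mul hb.le]
    norm_num
  have hVR : V = 4 * Real.pi / 3 * R ^ 3 := by
    rw [hR3]; field_simp
  -- the tail bound: outside the ball the integrand minus R⁻¹ is zero
  have hc : (4:ℝ) * Real.pi / 3 * R ^ 2 ≤ 2 * Real.pi * R ^ 2 := by nlinarith [sq_nonneg R]
  calc ∫⁻ y in Ω, ENNReal.ofReal (dist x y)⁻¹ ∂volume
      ≤ ∫⁻ y in Ω, (ENNReal.ofReal R⁻¹
          + (ENNReal.ofReal (dist x y)⁻¹ - ENNReal.ofReal R⁻¹)) ∂volume :=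
        lintegral_mono fun y => le_add_tsub
    _ = ENNReal.ofReal R⁻¹ * volume Ω
          + ∫⁻ y in Ω, (ENNReal.ofReal (dist x y)⁻¹ - ENNReal.ofReal R⁻¹) ∂volume := by
        rw [lintegral_add_left measurable_const, setLIntegral_const]
    _ ≤ ENNReal.ofReal (4 * Real.pi / 3 * R ^ 2)
          + (ENNReal.ofReal (2 * Real.pi * R ^ 2) - ENNReal.ofReal (4 * Real.pi / 3 * R ^ 2)) := by
        gcongr ?_ + ?_
        · rw [hV, ← ENNReal.ofReal_mul (by positivity)]
          apply ENNReal.ofReal_le_ofReal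
          rw [hVR]
          rw [show R⁻¹ * (4 * Real.pi / 3 * R ^ 3) = 4 * Real.pi / 3 * R ^ 2 * (R⁻¹ * R) by ring,
            inv_mul_cancel₀ hR.ne', mul_one]
        · calc ∫⁻ y in Ω, (ENNReal.ofReal (dist x y)⁻¹ - ENNReal.ofReal R⁻¹) ∂volume
              ≤ ∫⁻ y, (ENNReal.ofReal (dist x y)⁻¹ - ENNReal.ofReal R⁻¹) ∂volume :=
                setLIntegral_le_lintegral _ _
            _ = ∫⁻ y in ball x R, (ENNReal.ofReal (dist x y)⁻¹ - ENNReal.ofReal R⁻¹) ∂volume := by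
                rw [← lintegral_add_compl _ (measurableSet_ball (x := x) (ε := R))]
                have : ∫⁻ y in (ball x R)ᶜ,
                    (ENNReal.ofReal (dist x y)⁻¹ - ENNReal.ofReal R⁻¹) ∂volume = 0 := by
                  rw [setLIntegral_congr_fun measurableSet_ball.compl
                    (fun y hy => ?_), lintegral_zero]
                  have h1 : R ≤ dist x y := by
                    rw [dist_comm]
                    simpa [mem_ball, not_lt] using hy
                  have h2 : (dist x y)⁻¹ ≤ R⁻¹ :=
                    inv_anti₀ hR h1
                  exact tsub_eq_zero_of_le (ENNReal.ofReal_le_ofReal h2)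
                rw [this, add_zero]
            _ = ∫⁻ y in ball x R, ENNReal.ofReal (dist x y)⁻¹ ∂volume
                  - ∫⁻ y in ball x R, ENNReal.ofReal R⁻¹ ∂volume := by
                apply lintegral_sub measurable_const
                · rw [setLIntegral_const, vol_ball3 x hR.le,
                    ← ENNReal.ofReal_mul (by positivity)]
                  exact ENNReal.ofReal_ne_top
                · have hae : ∀ᵐ y ∂(volume.restrict (ball x R)), y ≠ x := by
                    apply ae_restrict_of_ae
                    have : volume ({x} : Set (EuclideanSpace ℝ (Fin 3))) = 0 :=
                      measure_singleton x
                    rw [ae_iff]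
                    convert this using 2
                    ext y; simp
                  filter_upwards [hae, ae_restrict_mem measurableSet_ball] with y hy hymem
                  apply ENNReal.ofReal_le_ofReal
                  have hd : 0 < dist x y := dist_pos.2 fun h => hy h.symm
                  have : dist x y < R := by rwa [mem_ball, dist_comm] at hymem
                  exact le_of_lt ((inv_lt_inv₀ hR hd).2 this)
            _ = ENNReal.ofReal (2 * Real.pi * R ^ 2)
                  - ENNReal.ofReal (4 * Real.pi / 3 * R ^ 2) := by
                rw [ball_lintegral x hR, setLIntegral_const, vol_ball3 x hR.le,
                  ← ENNReal.ofReal_mul (by positivity)]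
                congr 2
                rw [show R⁻¹ * (4 * Real.pi / 3 * R ^ 3)
                  = 4 * Real.pi / 3 * R ^ 2 * (R⁻¹ * R) by ring,
                  inv_mul_cancel₀ hR.ne', mul_one]
    _ = ENNReal.ofReal (2 * Real.pi * R ^ 2) :=
        add_tsub_cancel_of_le (ENNReal.ofReal_le_ofReal hc)

lemma norm_Phi (κ : ℝ) (x y : EuclideanSpace ℝ (Fin 3)) :
    ‖Phi κ x y‖ = (4 * Real.pi)⁻¹ * (dist x y)⁻¹ := by
  rw [Phi, norm_div]
  have h1 : Complex.I * (κ : ℂ) * ((dist x y : ℝ) : ℂ)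
      = ((κ * dist x y : ℝ) : ℂ) * Complex.I := by push_cast; ring
  have h2 : ‖Complex.exp (Complex.I * (κ : ℂ) * ((dist x y : ℝ) : ℂ))‖ = 1 := by
    rw [h1, Complex.norm_exp]
    simp
  rw [h2, Complex.norm_real, Real.norm_eq_abs,
    abs_of_nonneg (by positivity : (0:ℝ) ≤ 4 * Real.pi * dist x y), one_div, mul_inv]

theorem stmt12 (κ : ℝ) (hκ : 0 ≤ κ)
    (Ω : Set (EuclideanSpace ℝ (Fin 3))) (hΩ : MeasurableSet Ω)
    (V : ℝ) (hV0 : 0 ≤ V) (hV : volume Ω = ENNReal.ofReal V)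
    (Q₀ : ℝ) (hQ₀ : 0 ≤ Q₀)
    (q : EuclideanSpace ℝ (Fin 3) → ℂ)
    (hq_meas : AEStronglyMeasurable q (volume.restrict Ω))
    (hq : ∀ᵐ y ∂(volume.restrict Ω), ‖q y‖ ≤ Q₀) :
    ∀ f : EuclideanSpace ℝ (Fin 3) → ℂ, MemLp f 2 (volume.restrict Ω) →
      eLpNorm (fun x => ∫ y in Ω, Phi κ x y * q y * f y ∂(volume)) 2 (volume.restrict Ω) ≤
        ENNReal.ofReal ((Q₀ / 2) * (3 * V / (4 * Real.pi)) ^ ((2 : ℝ) / 3)) *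
          eLpNorm f 2 (volume.restrict Ω) := by
  intro f hf
  have hπ : (0:ℝ) < Real.pi := Real.pi_pos
  set μΩ := volume.restrict Ω with hμΩ
  -- measurable representatives
  set q' := hq_meas.mk q with hq'def
  have hq'm : StronglyMeasurable q' := hq_meas.stronglyMeasurable_mk
  have hqq' : q =ᵐ[μΩ] q' := hq_meas.ae_eq_mk
  have hfm := hf.aestronglyMeasurable
  set f' := hfm.mk f with hf'def
  have hf'm : StronglyMeasurable f' := hfm.stronglyMeasurable_mk
  have hff' : f =ᵐ[μΩ] f' := hfm.ae_eq_mk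
  have hq' : ∀ᵐ y ∂μΩ, ‖q' y‖ ≤ Q₀ := by
    filter_upwards [hq, hqq'] with y h1 h2
    rwa [← h2]
  have hg : (fun x => ∫ y in Ω, Phi κ x y * q y * f y ∂(volume))
      = fun x => ∫ y in Ω, Phi κ x y * q' y * f' y ∂(volume) := by
    funext x
    exact integral_congr_ae (by
      filter_upwards [hqq', hff'] with y h1 h2
      rw [h1, h2])
  rw [hg, eLpNorm_congr_ae hff']
  -- constants
  set R : ℝ := (3 * V / (4 * Real.pi)) ^ ((1:ℝ)/3) with hRdef
  set S : ℝ := 2 * Real.pi * R ^ 2 with hSdef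
  set c₀ : ℝ := (4 * Real.pi)⁻¹ * Q₀ with hc₀def
  have hc₀ : 0 ≤ c₀ := by positivity
  have hS : 0 ≤ S := by positivity
  set A' : ℝ≥0∞ := ENNReal.ofReal (c₀ * S) with hA'def
  have hbase : (0:ℝ) ≤ 3 * V / (4 * Real.pi) := by positivity
  have hAeq : ENNReal.ofReal ((Q₀ / 2) * (3 * V / (4 * Real.pi)) ^ ((2 : ℝ) / 3)) = A' := by
    rw [hA'def]
    congr 1
    rw [hSdef, hc₀def, hRdef, ← Real.rpow_natCast ((3 * V / (4 * Real.pi)) ^ ((1:ℝ)/3)) 2,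
      ← Real.rpow_mul hbase]
    norm_num
    field_simp
    ring
  rw [hAeq]
  -- kernel
  set k : EuclideanSpace ℝ (Fin 3) → EuclideanSpace ℝ (Fin 3) → ℝ≥0∞ :=
    fun x y => ENNReal.ofReal (c₀ * (dist x y)⁻¹) with hkdef
  have hk_meas : ∀ x, Measurable (k x) := fun x =>
    (measurable_const.mul ((continuous_const.dist continuous_id).measurable.inv)).ennreal_ofReal
  have hk_symm : ∀ x y, k x y = k y x := fun x y => by rw [hkdef]; simp [dist_comm]
  -- kernel integral bound
  have hkint : ∀ x, ∫⁻ y in Ω, k x y ∂volume ≤ A' := by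
    intro x
    have : ∫⁻ y in Ω, k x y ∂volume
        = ENNReal.ofReal c₀ * ∫⁻ y in Ω, ENNReal.ofReal (dist x y)⁻¹ ∂volume := by
      have h1 : ∫⁻ y in Ω, k x y ∂volume
          = ∫⁻ y in Ω, ENNReal.ofReal c₀ * ENNReal.ofReal (dist x y)⁻¹ ∂volume := by
        apply lintegral_congr
        intro y
        rw [hkdef]
        exact ENNReal.ofReal_mul hc₀
      have hdm : Measurable (fun y => ENNReal.ofReal (dist x y)⁻¹) := by
        apply Measurable.ennreal_ofReal
        apply Measurable.inv
        exact measurable_const.dist measurable_id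
      rw [h1, lintegral_const_mul _ hdm]
    rw [this, hA'def, ENNReal.ofReal_mul hc₀]
    exact mul_le_mul_right (key_bound Ω hV0 hV x) _
  -- pointwise kernel bound
  have hkern : ∀ x, ∀ᵐ y ∂μΩ,
      (‖Phi κ x y * q' y * f' y‖₊ : ℝ≥0∞) ≤ k x y * (‖f' y‖₊ : ℝ≥0∞) := by
    intro x
    filter_upwards [hq'] with y hy
    rw [nnnorm_mul, ENNReal.coe_mul]
    apply mul_le_mul_left
    rw [← ENNReal.ofReal_coe_nnreal, coe_nnnorm, hkdef]
    apply ENNReal.ofReal_le_ofReal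
    rw [norm_mul, norm_Phi]
    calc (4 * Real.pi)⁻¹ * (dist x y)⁻¹ * ‖q' y‖
        ≤ (4 * Real.pi)⁻¹ * (dist x y)⁻¹ * Q₀ := by
          apply mul_le_mul_of_nonneg_left _ (by positivity)
          exact hy
      _ = c₀ * (dist x y)⁻¹ := by rw [hc₀def]; ring
  -- Cauchy-Schwarz pointwise in x
  have hF_meas : Measurable (fun y => ((‖f' y‖₊ : ℝ≥0∞))) := hf'm.measurable.nnnorm.coe_nnreal_ennreal
  have hCS : ∀ x, (‖∫ y in Ω, Phi κ x y * q' y * f' y ∂volume‖₊ : ℝ≥0∞) ^ (2:ℝ)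
      ≤ A' * ∫⁻ y in Ω, k x y * (‖f' y‖₊ : ℝ≥0∞) ^ (2:ℝ) ∂volume := by
    intro x
    have h1 : (‖∫ y in Ω, Phi κ x y * q' y * f' y ∂volume‖₊ : ℝ≥0∞)
        ≤ ∫⁻ y in Ω, (‖Phi κ x y * q' y * f' y‖₊ : ℝ≥0∞) ∂volume :=
      enorm_integral_le_lintegral_enorm _
    have h2 : ∫⁻ y in Ω, (‖Phi κ x y * q' y * f' y‖₊ : ℝ≥0∞) ∂volume
        ≤ ∫⁻ y in Ω, k x y * (‖f' y‖₊ : ℝ≥0∞) ∂volume :=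
      lintegral_mono_ae (hkern x)
    have h3 : ∫⁻ y in Ω, k x y * (‖f' y‖₊ : ℝ≥0∞) ∂volume
        ≤ (∫⁻ y in Ω, k x y ∂volume) ^ ((1:ℝ)/2)
          * (∫⁻ y in Ω, k x y * (‖f' y‖₊ : ℝ≥0∞) ^ (2:ℝ) ∂volume) ^ ((1:ℝ)/2) := by
      have hconj : Real.HolderConjugate 2 2 := Real.HolderConjugate.two_two
      have := ENNReal.lintegral_mul_le_Lp_mul_Lq μΩ hconj
        (((hk_meas x).pow_const _).aemeasurable)
        ((((hk_meas x).pow_const _).mul (hF_meas)).aemeasurable)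
        (f := fun y => (k x y) ^ ((1:ℝ)/2))
        (g := fun y => (k x y) ^ ((1:ℝ)/2) * (‖f' y‖₊ : ℝ≥0∞))
      rw [hμΩ] at this
      calc ∫⁻ y in Ω, k x y * (‖f' y‖₊ : ℝ≥0∞) ∂volume
          = ∫⁻ y in Ω, ((k x y) ^ ((1:ℝ)/2))
              * ((k x y) ^ ((1:ℝ)/2) * (‖f' y‖₊ : ℝ≥0∞)) ∂volume := by
            congr 1
            funext y
            rw [← mul_assoc, ← ENNReal.rpow_add_of_nonneg _ _ (by norm_num) (by norm_num)]
            norm_num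
        _ ≤ (∫⁻ y in Ω, ((k x y) ^ ((1:ℝ)/2)) ^ (2:ℝ) ∂volume) ^ ((1:ℝ)/2)
            * (∫⁻ y in Ω, ((k x y) ^ ((1:ℝ)/2) * (‖f' y‖₊ : ℝ≥0∞)) ^ (2:ℝ) ∂volume) ^ ((1:ℝ)/2) := by
            simpa using this
        _ = (∫⁻ y in Ω, k x y ∂volume) ^ ((1:ℝ)/2)
            * (∫⁻ y in Ω, k x y * (‖f' y‖₊ : ℝ≥0∞) ^ (2:ℝ) ∂volume) ^ ((1:ℝ)/2) := by
            congr 2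
            · apply lintegral_congr
              intro y
              rw [← ENNReal.rpow_mul]
              norm_num [ENNReal.rpow_one]
            · apply lintegral_congr
              intro y
              rw [ENNReal.mul_rpow_of_nonneg _ _ (by norm_num), ← ENNReal.rpow_mul]
              norm_num [ENNReal.rpow_one]
    calc (‖∫ y in Ω, Phi κ x y * q' y * f' y ∂volume‖₊ : ℝ≥0∞) ^ (2:ℝ)
        ≤ ((∫⁻ y in Ω, k x y ∂volume) ^ ((1:ℝ)/2)
          * (∫⁻ y in Ω, k x y * (‖f' y‖₊ : ℝ≥0∞) ^ (2:ℝ) ∂volume) ^ ((1:ℝ)/2)) ^ (2:ℝ) :=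
          ENNReal.rpow_le_rpow (h1.trans (h2.trans h3)) (by norm_num)
      _ = (∫⁻ y in Ω, k x y ∂volume)
          * (∫⁻ y in Ω, k x y * (‖f' y‖₊ : ℝ≥0∞) ^ (2:ℝ) ∂volume) := by
          rw [ENNReal.mul_rpow_of_nonneg _ _ (by norm_num), ← ENNReal.rpow_mul,
            ← ENNReal.rpow_mul]
          norm_num
      _ ≤ A' * ∫⁻ y in Ω, k x y * (‖f' y‖₊ : ℝ≥0∞) ^ (2:ℝ) ∂volume :=
          mul_le_mul_left (hkint x) _
  -- integrate in x and swap
  have hswap : ∫⁻ x in Ω, ∫⁻ y in Ω, k x y * (‖f' y‖₊ : ℝ≥0∞) ^ (2:ℝ) ∂volume ∂volume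
      = ∫⁻ y in Ω, (∫⁻ x in Ω, k x y ∂volume) * (‖f' y‖₊ : ℝ≥0∞) ^ (2:ℝ) ∂volume := by
    rw [lintegral_lintegral_swap]
    · congr 1
      funext y
      rw [lintegral_mul_const' _ _ (by
        exact (ENNReal.rpow_lt_top_of_nonneg (by norm_num) ENNReal.coe_ne_top).ne)]
    · apply Measurable.aemeasurable
      apply Measurable.mul
      · exact (measurable_const.mul
          ((continuous_dist.measurable).inv)).ennreal_ofReal
      · exact (hF_meas.comp measurable_snd).pow_const _
  have hmain : ∫⁻ x in Ω, (‖∫ y in Ω, Phi κ x y * q' y * f' y ∂volume‖₊ : ℝ≥0∞) ^ (2:ℝ) ∂volume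
      ≤ A' * (A' * ∫⁻ y in Ω, (‖f' y‖₊ : ℝ≥0∞) ^ (2:ℝ) ∂volume) := by
    calc ∫⁻ x in Ω, (‖∫ y in Ω, Phi κ x y * q' y * f' y ∂volume‖₊ : ℝ≥0∞) ^ (2:ℝ) ∂volume
        ≤ ∫⁻ x in Ω, A' * ∫⁻ y in Ω, k x y * (‖f' y‖₊ : ℝ≥0∞) ^ (2:ℝ) ∂volume ∂volume :=
          lintegral_mono hCS
      _ = A' * ∫⁻ x in Ω, ∫⁻ y in Ω, k x y * (‖f' y‖₊ : ℝ≥0∞) ^ (2:ℝ) ∂volume ∂volume :=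
          lintegral_const_mul' _ _ ENNReal.ofReal_ne_top
      _ = A' * ∫⁻ y in Ω, (∫⁻ x in Ω, k x y ∂volume) * (‖f' y‖₊ : ℝ≥0∞) ^ (2:ℝ) ∂volume := by
          rw [hswap]
      _ ≤ A' * ∫⁻ y in Ω, A' * (‖f' y‖₊ : ℝ≥0∞) ^ (2:ℝ) ∂volume := by
          apply mul_le_mul_right
          apply lintegral_mono
          intro y
          apply mul_le_mul_left
          calc ∫⁻ x in Ω, k x y ∂volume = ∫⁻ x in Ω, k y x ∂volume := by
                congr 1; funext x; rw [hk_symm]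
            _ ≤ A' := hkint y
      _ = A' * (A' * ∫⁻ y in Ω, (‖f' y‖₊ : ℝ≥0∞) ^ (2:ℝ) ∂volume) := by
          rw [lintegral_const_mul' _ _ ENNReal.ofReal_ne_top]
  -- conclude
  rw [eLpNorm_eq_lintegral_rpow_enorm_toReal (by norm_num) (by norm_num),
    eLpNorm_eq_lintegral_rpow_enorm_toReal (p := 2) (by norm_num) (by norm_num)]
  simp only [ENNReal.toReal_ofNat]
  calc (∫⁻ x, (‖∫ y in Ω, Phi κ x y * q' y * f' y ∂volume‖₊ : ℝ≥0∞) ^ (2:ℝ) ∂μΩ) ^ ((1:ℝ)/2)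
      ≤ (A' * (A' * ∫⁻ y, (‖f' y‖₊ : ℝ≥0∞) ^ (2:ℝ) ∂μΩ)) ^ ((1:ℝ)/2) := by
        apply ENNReal.rpow_le_rpow _ (by norm_num)
        exact hmain
    _ = A' * (∫⁻ y, (‖f' y‖₊ : ℝ≥0∞) ^ (2:ℝ) ∂μΩ) ^ ((1:ℝ)/2) := by
        rw [← mul_assoc, ENNReal.mul_rpow_of_nonneg _ _ (by norm_num)]
        congr 1
        rw [show A' * A' = A' ^ (2:ℕ) by ring, ← ENNReal.rpow_natCast, ← ENNReal.rpow_mul]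
        norm_num
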